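/- Let G be a connected R-graph with n ≥ 2 vertices and weighted Laplacian P, and let P_k be P with its k-th row and column deleted. Then every entry of the inverse matrix P_k^{-1} is nonnegative. -/

import Mathlib

open Matrix

section Aux

variable {m : Type*} [Fintype m] [DecidableEq m]

attribute [local instance] Matrix.linftyOpNormedRing Matrix.linftyOpNormedAlgebra

noncomputable instance aux_complete : CompleteSpace (Matrix m m ℝ) :=
  (by infer_instance : CompleteSpace (Matrix m m ℝ))

/-- entry evaluation as a continuous linear map -/
noncomputable def entryCLM (i j : m) : Matrix m m ℝ →L[ℝ] ℝ :=
  LinearMap.mkContinuous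
    { toFun := fun A => A i j
      map_add' := fun A B => rfl
      map_smul' := fun c A => rfl } 1
    (by
      intro A
      simp only [LinearMap.coe_mk, AddHom.coe_mk, one_mul]
      have h1 : ‖A i j‖₊ ≤ ∑ j' : m, ‖A i j'‖₊ :=
        Finset.single_le_sum (f := fun j' => ‖A i j'‖₊) (fun _ _ => zero_le)
          (Finset.mem_univ j)
      have h2 : (∑ j' : m, ‖A i j'‖₊) ≤ Finset.univ.sup fun i' : m => ∑ j' : m, ‖A i' j'‖₊ :=
        Finset.le_sup (f := fun i' : m => ∑ j' : m, ‖A i' j'‖₊) (Finset.mem_univ i)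
      have := h1.trans h2
      rw [← Matrix.linfty_opNNNorm_def] at this
      exact_mod_cast this)

theorem aux_pow_nonneg {M : Matrix m m ℝ} (hM : ∀ i j, 0 ≤ M i j) :
    ∀ (N : ℕ) (i j : m), 0 ≤ (M ^ N) i j := by
  intro N
  induction N with
  | zero => intro i j; simp [Matrix.one_apply]; positivity
  | succ N ih =>
    intro i j
    rw [pow_succ, Matrix.mul_apply]
    exact Finset.sum_nonneg fun l _ => mul_nonneg (ih i l) (hM l j)

theorem aux_neumann {M : Matrix m m ℝ} (hM : ∀ i j, 0 ≤ M i j)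
    (hrow : ∀ i, ∑ j : m, M i j < 1) : ∀ i j, 0 ≤ (1 - M)⁻¹ i j := by
  have hnorm : ‖M‖ < 1 := by
    have : ‖M‖₊ < 1 := by
      rw [Matrix.linfty_opNNNorm_def]
      refine Finset.sup_lt_iff (by norm_num) |>.2 fun i _ => ?_
      have : ∀ j, ‖M i j‖₊ = (⟨M i j, hM i j⟩ : NNReal) := fun j =>
        NNReal.eq (by simp [Real.norm_eq_abs, abs_of_nonneg (hM i j)]; rfl)
      have hc : ((∑ j : m, ‖M i j‖₊ : NNReal) : ℝ) = ∑ j : m, M i j := by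
        push_cast
        exact Finset.sum_congr rfl fun j _ => by
          simp [Real.norm_eq_abs, abs_of_nonneg (hM i j)]
      rw [← NNReal.coe_lt_coe, hc, NNReal.coe_one]
      exact hrow i
    exact_mod_cast this
  have hsum := summable_geometric_of_norm_lt_one hnorm
  have hinv : (1 - M)⁻¹ = ∑' n : ℕ, M ^ n :=
    Matrix.inv_eq_right_inv (mul_neg_geom_series M hnorm)
  intro i j
  rw [hinv]
  have hs : HasSum (fun n : ℕ => (entryCLM i j) (M ^ n)) ((entryCLM i j) (∑' n : ℕ, M ^ n)) :=
    (entryCLM i j).hasSum hsum.hasSum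
  have : (entryCLM i j) (∑' n : ℕ, M ^ n) = (∑' n : ℕ, M ^ n) i j := rfl
  rw [← this]
  exact hs.nonneg fun n => aux_pow_nonneg hM n i j

/-- inverse of a strictly diagonally dominant matrix with nonpositive off-diagonal entries is
entrywise nonnegative -/
theorem aux_sdd {B : Matrix m m ℝ} (hd : ∀ i, 0 < B i i)
    (hoff : ∀ i j, i ≠ j → B i j ≤ 0)
    (hdom : ∀ i, ∑ j ∈ Finset.univ.erase i, -B i j < B i i) :
    ∀ i j, 0 ≤ B⁻¹ i j := by
  set D : Matrix m m ℝ := Matrix.diagonal fun i => B i i with hD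
  set E : Matrix m m ℝ := Matrix.diagonal fun i => (B i i)⁻¹ with hE
  have hDE : D * E = 1 := by
    rw [hD, hE, Matrix.diagonal_mul_diagonal]
    rw [show (fun i => B i i * (B i i)⁻¹) = fun _ => (1:ℝ) from
      funext fun i => mul_inv_cancel₀ (hd i).ne', Matrix.diagonal_one]
  have hDinv : D⁻¹ = E := Matrix.inv_eq_right_inv hDE
  set M : Matrix m m ℝ := 1 - E * B with hM
  have hMentry : ∀ i j, M i j = (if i = j then 1 else 0) - (B i i)⁻¹ * B i j := by
    intro i j
    simp [hM, hE, Matrix.sub_apply, Matrix.one_apply, Matrix.diagonal_mul]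
  have hMnn : ∀ i j, 0 ≤ M i j := by
    intro i j
    rw [hMentry]
    by_cases h : i = j
    · subst h; rw [if_pos rfl, inv_mul_cancel₀ (hd i).ne']; norm_num
    · simp only [if_neg h]
      have := mul_nonpos_of_nonneg_of_nonpos (inv_nonneg.2 (hd i).le) (hoff i j h)
      linarith
  have hMrow : ∀ i, ∑ j : m, M i j < 1 := by
    intro i
    have hMii : M i i = 0 := by
      rw [hMentry, if_pos rfl, inv_mul_cancel₀ (hd i).ne', sub_self]
    rw [← Finset.add_sum_erase _ _ (Finset.mem_univ i), hMii, zero_add]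
    have heq : ∑ j ∈ Finset.univ.erase i, M i j
        = (B i i)⁻¹ * ∑ j ∈ Finset.univ.erase i, -B i j := by
      rw [Finset.mul_sum]
      refine Finset.sum_congr rfl fun j hj => ?_
      have hij : i ≠ j := fun h => (Finset.mem_erase.1 hj).1 h.symm
      rw [hMentry, if_neg hij]; ring
    rw [heq]
    calc (B i i)⁻¹ * ∑ j ∈ Finset.univ.erase i, -B i j
        < (B i i)⁻¹ * B i i := mul_lt_mul_of_pos_left (hdom i) (inv_pos.2 (hd i))
      _ = 1 := inv_mul_cancel₀ (hd i).ne'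
  have hBfac : B = D * (1 - M) := by
    rw [show (1 : Matrix m m ℝ) - M = E * B from by rw [hM, sub_sub_cancel],
      ← Matrix.mul_assoc, hDE, Matrix.one_mul]
  have hBinv : B⁻¹ = (1 - M)⁻¹ * E := by
    rw [hBfac, Matrix.mul_inv_rev, hDinv]
  intro i j
  rw [hBinv, Matrix.mul_apply]
  refine Finset.sum_nonneg fun l _ => mul_nonneg (aux_neumann hMnn hMrow i l) ?_
  rw [hE]
  by_cases h : l = j
  · subst h; simp [Matrix.diagonal_apply_eq, inv_nonneg.2 (hd l).le]
  · simp [Matrix.diagonal_apply_ne _ h]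

end Aux

section Main

attribute [local instance] Matrix.linftyOpNormedRing Matrix.linftyOpNormedAlgebra
  Matrix.linftyOpIsBoundedSMul

/-- For a connected edge-weighted graph on `n ≥ 2` vertices with Laplacian `P`,
every entry of the inverse of the reduced matrix `P_k` is nonnegative. -/
theorem stmt_2 {n : ℕ} (hn : 2 ≤ n) (p : Fin n → Fin n → ℝ)
    (hsym : ∀ i j, p i j = p j i) (hnn : ∀ i j, 0 ≤ p i j)
    (hloop : ∀ i, p i i = 0)
    (hconn : ∀ i j : Fin n, Relation.ReflTransGen (fun a b => 0 < p a b) i j)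
    (k : Fin n)
    (P : Matrix (Fin n) (Fin n) ℝ)
    (hP : ∀ i j, P i j = if i = j then ∑ l ∈ Finset.univ.erase i, p i l else -(p i j))
    (Pk : Matrix {i : Fin n // i ≠ k} {i : Fin n // i ≠ k} ℝ)
    (hPk : ∀ i j, Pk i j = P i.1 j.1) :
    ∀ i j, 0 ≤ Pk⁻¹ i j := by
  by_cases hdet : IsUnit Pk.det
  swap
  · intro i j
    rw [Matrix.nonsing_inv_apply_not_isUnit _ hdet]
    simp
  have hdiag : ∀ i, 0 ≤ Pk i i := by
    intro i
    rw [hPk, hP, if_pos rfl]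
    exact Finset.sum_nonneg fun l _ => hnn _ _
  have hoffPk : ∀ i j, i ≠ j → Pk i j ≤ 0 := by
    intro i j hij
    rw [hPk, hP, if_neg (fun h => hij (Subtype.ext h))]
    simpa using hnn i.1 j.1
  have hdomPk : ∀ i, ∑ j ∈ Finset.univ.erase i, -Pk i j ≤ Pk i i := by
    intro i
    have h1 : ∑ j ∈ Finset.univ.erase i, -Pk i j
        = ∑ j ∈ Finset.univ.erase i, p i.1 j.1 := by
      refine Finset.sum_congr rfl fun j hj => ?_
      have hij : i ≠ j := fun h => (Finset.mem_erase.1 hj).1 h.symm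
      rw [hPk, hP, if_neg (fun h => hij (Subtype.ext h)), neg_neg]
    have h2 : ∑ j ∈ Finset.univ.erase i, p i.1 j.1
        = ∑ l ∈ (Finset.univ.erase i).image Subtype.val, p i.1 l :=
      (Finset.sum_image (fun a _ b _ h => Subtype.val_injective h)).symm
    have h3 : (Finset.univ.erase i).image Subtype.val ⊆ Finset.univ.erase i.1 := by
      intro l hl
      obtain ⟨j, hj, rfl⟩ := Finset.mem_image.1 hl
      exact Finset.mem_erase.2 ⟨fun h => (Finset.mem_erase.1 hj).1 (Subtype.ext h),
        Finset.mem_univ _⟩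
    rw [h1, h2, hPk, hP, if_pos rfl]
    exact Finset.sum_le_sum_of_subset_of_nonneg h3 fun l _ _ => hnn _ _
  have heps : ∀ ε : ℝ, 0 < ε →
      ∀ i j, 0 ≤ (Pk + ε • (1 : Matrix {i : Fin n // i ≠ k} {i : Fin n // i ≠ k} ℝ))⁻¹ i j := by
    intro ε hε
    have hentry : ∀ i j, (Pk + ε • (1 : Matrix {i : Fin n // i ≠ k} {i : Fin n // i ≠ k} ℝ)) i j
        = Pk i j + ε * (if i = j then 1 else 0) := by
      intro i j
      simp [Matrix.add_apply, Matrix.smul_apply, Matrix.one_apply]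
    apply aux_sdd
    · intro i
      rw [hentry, if_pos rfl, mul_one]
      have := hdiag i; linarith
    · intro i j hij
      rw [hentry, if_neg hij, mul_zero, add_zero]
      exact hoffPk i j hij
    · intro i
      have h1 : ∑ j ∈ Finset.univ.erase i, -(Pk + ε • (1 : Matrix {i : Fin n // i ≠ k} {i : Fin n // i ≠ k} ℝ)) i j
          = ∑ j ∈ Finset.univ.erase i, -Pk i j := by
        refine Finset.sum_congr rfl fun j hj => ?_
        have hij : i ≠ j := fun h => (Finset.mem_erase.1 hj).1 h.symm
        rw [hentry, if_neg hij, mul_zero, add_zero]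
      rw [h1, hentry, if_pos rfl, mul_one]
      have := hdomPk i; linarith
  -- now take the limit ε → 0⁺
  intro i j
  have hu : IsUnit Pk := (Matrix.isUnit_iff_isUnit_det _).2 hdet
  obtain ⟨u, hu'⟩ := hu
  have hcont : Filter.Tendsto (fun ε : ℝ => Pk + ε • (1 : Matrix {i : Fin n // i ≠ k} {i : Fin n // i ≠ k} ℝ))
      (nhdsWithin 0 (Set.Ioi 0)) (nhds Pk) := by
    have hc : Continuous fun ε : ℝ => Pk + ε • (1 : Matrix {i : Fin n // i ≠ k} {i : Fin n // i ≠ k} ℝ) :=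
      continuous_const.add (continuous_id.smul continuous_const)
    have h0 : Pk + (0 : ℝ) • (1 : Matrix {i : Fin n // i ≠ k} {i : Fin n // i ≠ k} ℝ) = Pk := by simp
    have := (hc.tendsto 0).mono_left (nhdsWithin_le_nhds (s := Set.Ioi (0:ℝ)))
    rwa [h0] at this
  have hinvcont : Filter.Tendsto (fun ε : ℝ => Ring.inverse (Pk + ε • (1 : Matrix {i : Fin n // i ≠ k} {i : Fin n // i ≠ k} ℝ)))
      (nhdsWithin 0 (Set.Ioi 0)) (nhds (Ring.inverse Pk)) := by
    have := (NormedRing.inverse_continuousAt u).tendsto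
    rw [hu'] at this
    exact this.comp hcont
  have hentrycont : Filter.Tendsto
      (fun ε : ℝ => (Ring.inverse (Pk + ε • (1 : Matrix {i : Fin n // i ≠ k} {i : Fin n // i ≠ k} ℝ))) i j)
      (nhdsWithin 0 (Set.Ioi 0)) (nhds ((Ring.inverse Pk) i j)) :=
    ((entryCLM i j).continuous.tendsto _).comp hinvcont
  have hev : ∀ᶠ ε : ℝ in nhdsWithin 0 (Set.Ioi 0),
      0 ≤ (Ring.inverse (Pk + ε • (1 : Matrix {i : Fin n // i ≠ k} {i : Fin n // i ≠ k} ℝ))) i j := by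
    refine Filter.eventually_of_mem self_mem_nhdsWithin fun ε hε => ?_
    rw [← Matrix.nonsing_inv_eq_ringInverse]
    exact heps ε hε i j
  have := ge_of_tendsto hentrycont hev
  rwa [Matrix.nonsing_inv_eq_ringInverse]

end Main
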